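/- For integers k, d, ℓ with 1 ≤ ℓ ≤ k - 4 ≤ d - 4, define g(ℓ) := d(d - ℓ - 1) - (1/2)(2d - k - ℓ + 1)(2d + k - 3ℓ - 5). If g(ℓ) ≥ 0 for some ℓ < k - 4, then g(ℓ + 1) ≥ 0. -/
import Mathlib

theorem stmt_10 (k d ℓ : ℤ) (hℓ1 : 1 ≤ ℓ) (hℓ2 : ℓ < k - 4) (hkd : k ≤ d)
    (g : ℤ → ℝ)
    (hg : ∀ x : ℤ, g x = (d : ℝ) * ((d : ℝ) - x - 1)
        - (1/2) * (2 * (d : ℝ) - k - x + 1) * (2 * (d : ℝ) + k - 3 * x - 5))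
    (h : 0 ≤ g ℓ) : 0 ≤ g (ℓ + 1) := by
  have h1 : (1:ℝ) ≤ (ℓ:ℝ) := by exact_mod_cast hℓ1
  have h2 : (ℓ:ℝ) ≤ (k:ℝ) - 5 := by exact_mod_cast (by omega : ℓ ≤ k - 5)
  have h3 : (k:ℝ) ≤ (d:ℝ) := by exact_mod_cast hkd
  rw [hg] at h ⊢
  push_cast at h ⊢
  rcases le_or_gt (6*ℓ) (6*d-2*k-5) with hc | hc
  · have hc' : 6*(ℓ:ℝ) ≤ 6*(d:ℝ) - 2*(k:ℝ) - 5 := by exact_mod_cast hc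
    nlinarith [hc', h]
  · have hB : 3*d ≤ 4*k - 13 := by omega
    have hB' : 3*(d:ℝ) ≤ 4*(k:ℝ) - 13 := by exact_mod_cast hB
    nlinarith [h, mul_nonneg h (show (0:ℝ) ≤ (k:ℝ)-4-ℓ by linarith),
      mul_nonneg (show (0:ℝ) ≤ 4*(k:ℝ)-13-3*d by linarith) (show (0:ℝ) ≤ (d:ℝ)-k+5 by linarith),
      mul_nonneg (show (0:ℝ) ≤ (k:ℝ)-4-ℓ by linarith) (show (0:ℝ) ≤ (k:ℝ)-3-ℓ by linarith),
      sq_nonneg ((d:ℝ)-k), (show (0:ℝ) ≤ (k:ℝ)-3-ℓ by linarith)]
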